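/- Let F be a filter on ω extending the cofinite filter. For any analytic set A ⊆ ω^ω, either there exists a tree H ∈ H_F with [H] ∩ A = ∅, or there exists a tree L ∈ L_F with [L] ⊆ A. -/

import Mathlib

/-- The restriction `x↾n` of `x : ℕ → ℕ` to its first `n` values, as a finite sequence. -/
def res (x : ℕ → ℕ) (n : ℕ) : List ℕ := List.ofFn fun i : Fin n => x i

/-- A subtree of `ω^{<ω}`: a set of finite sequences closed under initial segments. -/
def IsSubtree (T : Set (List ℕ)) : Prop := ∀ s ∈ T, ∀ t : List ℕ, t <+: s → t ∈ T

/-- `[T]`, the set of branches of a subtree `T`. -/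
def branches (T : Set (List ℕ)) : Set (ℕ → ℕ) := {x | ∀ n, res x n ∈ T}

/-- `H ∈ H_F`: a nonempty subtree each of whose nodes splits along a set in `F`. -/
def MemHechlerF (F : Filter ℕ) (H : Set (List ℕ)) : Prop :=
  IsSubtree H ∧ [] ∈ H ∧ ∀ s ∈ H, {n : ℕ | s ++ [n] ∈ H} ∈ F

/-- `L ∈ L_F`: a nonempty subtree each of whose nodes splits along an `F`-positive set. -/
def MemLaverF (F : Filter ℕ) (L : Set (List ℕ)) : Prop :=
  IsSubtree L ∧ [] ∈ L ∧ ∀ s ∈ L, {n : ℕ | s ++ [n] ∈ L}ᶜ ∉ F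

/-- A set `A ⊆ ω^ω` is analytic iff it is a continuous image of a closed subset of `ω^ω`. -/
def IsAnalytic (A : Set (ℕ → ℕ)) : Prop :=
  ∃ (C : Set (ℕ → ℕ)) (f : (ℕ → ℕ) → (ℕ → ℕ)),
    IsClosed C ∧ ContinuousOn f C ∧ A = f '' C

namespace HLD

open Filter Set

attribute [local instance] Classical.propDecidable

lemma res_length (x : ℕ → ℕ) (n : ℕ) : (res x n).length = n := by simp [res]

lemma res_zero (x : ℕ → ℕ) : res x 0 = [] := rfl

lemma res_getElem (x : ℕ → ℕ) {j n : ℕ} (h : j < n) :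
    (res x n)[j]'(by simpa [res_length] using h) = x j := by
  simp [res]

lemma res_succ (x : ℕ → ℕ) (n : ℕ) : res x (n + 1) = res x n ++ [x n] := by
  rw [res, List.ofFn_succ']
  simp [res, List.concat_eq_append]

lemma res_take (x : ℕ → ℕ) {j n : ℕ} (h : j ≤ n) : (res x n).take j = res x j := by
  apply List.ext_getElem
  · simp [res_length]; omega
  · intro i h1 h2
    have hi : i < j := by simpa [res_length] using h2
    rw [List.getElem_take]
    rw [res_getElem x (lt_of_lt_of_le hi h), res_getElem x hi]

lemma res_prefix (x : ℕ → ℕ) {j n : ℕ} (h : j ≤ n) : res x j <+: res x n := by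
  rw [← res_take x h]; exact List.take_prefix _ _

/-- If `res x (v.length) = v` then entries of `v` are values of `x`. -/
lemma res_eq_getElem {x : ℕ → ℕ} {v : List ℕ} (hv : res x v.length = v)
    {j : ℕ} (h : j < v.length) : v[j] = x j := by
  have h2 : j < (res x v.length).length := by simpa [res_length] using h
  have h3 : v[j]'h = (res x v.length)[j]'h2 := List.getElem_of_eq hv.symm h
  rw [h3, res_getElem x h]

lemma res_eq_of_prefix {x : ℕ → ℕ} {v w : List ℕ} (hv : res x v.length = v)
    (hw : w <+: v) : res x w.length = w := by
  obtain ⟨u, rfl⟩ := hw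
  have h1 : w.length ≤ (w ++ u).length := by simp
  have := res_take x h1
  rw [hv] at this
  rw [← this, List.take_left]

section Core

open Filter Set

attribute [local instance] Classical.propDecidable

variable (F : Filter ℕ) (T : Set (List ℕ × List ℕ))

/-- `y` witnesses `x` through the tree of pairs `T`. -/
def Wit (x y : ℕ → ℕ) : Prop := ∀ k, (res x k, res y k) ∈ T

/-- The set of elements of the projection of `[T]` compatible with node `v` and tether `t`. -/
def BigSet (v t : List ℕ) : Set (ℕ → ℕ) :=
  {x | res x v.length = v ∧ ∃ y, res y t.length = t ∧ Wit T x y}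

/-- `x` obeys the slalom `S` from level `m` on. -/
def Obeys (S : List ℕ → Set ℕ) (m : ℕ) (x : ℕ → ℕ) : Prop :=
  ∀ k, m ≤ k → x k ∈ S (res x k)

/-- `(v, t)` is big: no Hechler-type slalom can avoid `BigSet T v t` from level `|v|` on. -/
def Big (v t : List ℕ) : Prop :=
  ∀ S : List ℕ → Set ℕ, (∀ u, S u ∈ F) → ∃ x ∈ BigSet T v t, Obeys S v.length x

lemma notBig_iff {v t : List ℕ} :
    ¬ Big F T v t ↔ ∃ S : List ℕ → Set ℕ, (∀ u, S u ∈ F) ∧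
      ∀ x ∈ BigSet T v t, ∃ k, v.length ≤ k ∧ x k ∉ S (res x k) := by
  unfold Big Obeys
  push_neg
  rfl

/-- A canonical escaping slalom for a non-big pair (junk otherwise). -/
noncomputable def esc (v t : List ℕ) : List ℕ → Set ℕ :=
  if h : ¬ Big F T v t then ((notBig_iff F T).1 h).choose else fun _ => univ

lemma esc_mem (v t u : List ℕ) : esc F T v t u ∈ F := by
  unfold esc
  split
  · next h => exact (((notBig_iff F T).1 h).choose_spec).1 u
  · exact univ_mem

lemma esc_spec {v t : List ℕ} (h : ¬ Big F T v t) :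
    ∀ x ∈ BigSet T v t, ∃ k, v.length ≤ k ∧ x k ∉ esc F T v t (res x k) := by
  unfold esc
  rw [dif_pos h]
  exact (((notBig_iff F T).1 h).choose_spec).2

lemma bigSet_nonempty {v t : List ℕ} (h : Big F T v t) : (BigSet T v t).Nonempty := by
  obtain ⟨x, hx, -⟩ := h (fun _ => univ) (fun _ => univ_mem)
  exact ⟨x, hx⟩

lemma bigSet_extend_left {x : ℕ → ℕ} {v t : List ℕ} (hx : x ∈ BigSet T v t) :
    x ∈ BigSet T (v ++ [x v.length]) t := by
  obtain ⟨h1, y, h2, h3⟩ := hx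
  refine ⟨?_, y, h2, h3⟩
  rw [show (v ++ [x v.length]).length = v.length + 1 by simp, res_succ, h1]

/-- Claim A : if `{n | Big (v⌢n) t}` is F-small then `(v,t)` is not big. -/
lemma claimA_aux {v t : List ℕ} (hW : {n | Big F T (v ++ [n]) t}ᶜ ∈ F) :
    ¬ Big F T v t := by
  intro hbig
  classical
  set S : List ℕ → Set ℕ := fun u =>
    if v.length < u.length then esc F T (v ++ [u.getD v.length 0]) t u
    else {n | Big F T (v ++ [n]) t}ᶜ with hS
  obtain ⟨x, hx, hob⟩ := hbig S (by
    intro u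
    rw [hS]
    dsimp only
    split
    · exact esc_mem F T _ _ _
    · exact hW)
  -- first step : x v.length escapes into the non-big zone
  have h0 := hob v.length le_rfl
  rw [hx.1] at h0
  have hlt : ¬ v.length < v.length := lt_irrefl _
  rw [hS] at h0
  simp only [hlt, if_false] at h0
  have hnb : ¬ Big F T (v ++ [x v.length]) t := h0
  -- x belongs to the extended big set
  have hx' : x ∈ BigSet T (v ++ [x v.length]) t := bigSet_extend_left T hx
  obtain ⟨k, hk, hesc⟩ := esc_spec F T hnb x hx'
  have hk' : v.length < k := by
    have : (v ++ [x v.length]).length = v.length + 1 := by simp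
    omega
  have hob2 := hob k (le_of_lt hk')
  rw [hS] at hob2
  have hlen : v.length < (res x k).length := by rwa [res_length]
  simp only [hlen, if_true] at hob2
  have hgd : (res x k).getD v.length 0 = x v.length := by
    rw [List.getD_eq_getElem _ _ hlen, res_getElem x hk']
  rw [hgd] at hob2
  exact hesc hob2

lemma claimA {v t : List ℕ} (h : Big F T v t) : {n | Big F T (v ++ [n]) t}ᶜ ∉ F :=
  fun hc => claimA_aux F T hc h

end Core
section Derivative

open Filter Set

attribute [local instance] Classical.propDecidable

variable (F : Filter ℕ) (T : Set (List ℕ × List ℕ))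

/-- One step of the derivative: either the tether is extendably big, or
F-positively many immediate extensions are big and already in `X`. -/
def Phi (X : Set (List ℕ × List ℕ)) : Set (List ℕ × List ℕ) :=
  {p | (∃ m, Big F T p.1 (p.2 ++ [m])) ∨
    {n | Big F T (p.1 ++ [n]) p.2 ∧ (p.1 ++ [n], p.2) ∈ X}ᶜ ∉ F}

lemma Phi_mono {X Y : Set (List ℕ × List ℕ)} (h : X ⊆ Y) : Phi F T X ⊆ Phi F T Y := by
  intro p hp
  rcases hp with hb | hs
  · exact Or.inl hb
  · refine Or.inr fun hc => hs (mem_of_superset hc ?_)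
    intro n hn
    simp only [mem_compl_iff, mem_setOf_eq] at hn ⊢
    exact fun ⟨h1, h2⟩ => hn ⟨h1, h h2⟩

noncomputable def GFr : Ordinal.{0} → Set (List ℕ × List ℕ) :=
  Ordinal.lt_wf.fix fun α ih => Phi F T (⋃ β, ⋃ h : β < α, ih β h)

lemma GFr_eq (α : Ordinal) :
    GFr F T α = Phi F T (⋃ β, ⋃ _ : β < α, GFr F T β) := by
  show Ordinal.lt_wf.fix _ α = _
  rw [WellFounded.fix_eq]
  rfl

def GFp (p : List ℕ × List ℕ) : Prop := ∃ α, p ∈ GFr F T α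

lemma phi_GFp_subset : Phi F T {p | GFp F T p} ⊆ {p | GFp F T p} := by
  intro p hp
  rcases hp with hb | hs
  · exact ⟨0, by rw [GFr_eq]; exact Or.inl hb⟩
  · set g : ℕ → Ordinal := fun n =>
      if h : GFp F T (p.1 ++ [n], p.2) then h.choose else 0 with hg
    have hgs : ∀ n, GFp F T (p.1 ++ [n], p.2) → (p.1 ++ [n], p.2) ∈ GFr F T (g n) := by
      intro n hn
      rw [hg]
      simp only [dif_pos hn]
      exact hn.choose_spec
    refine ⟨Order.succ (⨆ n, g n), ?_⟩
    rw [GFr_eq]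
    refine Or.inr fun hc => hs (mem_of_superset hc ?_)
    intro n hn
    simp only [mem_compl_iff, mem_setOf_eq] at hn ⊢
    intro ⟨h1, h2⟩
    refine hn ⟨h1, mem_iUnion.2 ⟨g n, mem_iUnion.2 ⟨?_, hgs n h2⟩⟩⟩
    exact Order.lt_succ_of_le (le_ciSup (Ordinal.bddAbove_range _) n)

noncomputable def rk (p : List ℕ × List ℕ) : Ordinal :=
  if h : GFp F T p then Ordinal.lt_wf.min {α | p ∈ GFr F T α} h else 0

lemma rk_mem {p : List ℕ × List ℕ} (h : GFp F T p) : p ∈ GFr F T (rk F T p) := by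
  rw [rk, dif_pos h]
  exact Ordinal.lt_wf.min_mem _ h

lemma rk_le {p : List ℕ × List ℕ} {β : Ordinal} (h : p ∈ GFr F T β) : rk F T p ≤ β := by
  rw [rk, dif_pos ⟨β, h⟩]
  exact not_lt.1 (Ordinal.lt_wf.not_lt_min _ h)

lemma rankStep {v t : List ℕ} (hGF : GFp F T (v, t))
    (hnE : ¬ ∃ m, Big F T v (t ++ [m])) :
    {n | Big F T (v ++ [n]) t ∧ rk F T (v ++ [n], t) < rk F T (v, t)}ᶜ ∉ F := by
  have hmem := rk_mem F T hGF
  rw [GFr_eq] at hmem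
  rcases hmem with hb | hs
  · exact absurd hb hnE
  · refine fun hc => hs (mem_of_superset hc ?_)
    intro n hn
    simp only [mem_compl_iff, mem_setOf_eq] at hn ⊢
    intro ⟨h1, h2⟩
    obtain ⟨β, hβ⟩ := mem_iUnion.1 h2
    obtain ⟨hβlt, hβmem⟩ := mem_iUnion.1 hβ
    exact hn ⟨h1, lt_of_le_of_lt (rk_le F T hβmem) hβlt⟩

/-- The consequences of not being in the derivative fixed region. -/
lemma notGFp_spec {u t : List ℕ} (hng : ¬ GFp F T (u, t)) :
    (∀ m, ¬ Big F T u (t ++ [m])) ∧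
      {n | Big F T (u ++ [n]) t ∧ GFp F T (u ++ [n], t)}ᶜ ∈ F := by
  have hnPhi : (u, t) ∉ Phi F T {p | GFp F T p} :=
    fun h => hng (phi_GFp_subset F T h)
  rw [Phi] at hnPhi
  simp only [mem_setOf_eq, not_or, not_exists, not_not] at hnPhi
  exact ⟨hnPhi.1, hnPhi.2⟩

/-- Claim G : every big pair is in the derivative region. -/
lemma claimG {v t : List ℕ} (hb : Big F T v t) : GFp F T (v, t) := by
  by_contra hng
  classical
  set c1 : List ℕ → Set ℕ := fun u =>
    if {n | Big F T (u ++ [n]) t ∧ GFp F T (u ++ [n], t)}ᶜ ∈ F then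
      {n | Big F T (u ++ [n]) t ∧ GFp F T (u ++ [n], t)}ᶜ else univ with hc1
  set c2 : List ℕ → Set ℕ := fun u =>
    ⋂ j ∈ Set.Iic u.length, esc F T (u.take j) t u with hc2
  set c3 : List ℕ → Set ℕ := fun u =>
    ⋂ j ∈ Set.Iic u.length, ⋂ m ∈ Set.Iic u.length, esc F T (u.take j) (t ++ [m]) u with hc3
  set S : List ℕ → Set ℕ := fun u => c1 u ∩ (c2 u ∩ c3 u) with hgS
  have hSF : ∀ u, S u ∈ F := by
    intro u
    refine inter_mem ?_ (inter_mem ?_ ?_)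
    · rw [hc1]; dsimp only; split
      · assumption
      · exact univ_mem
    · rw [hc2]
      exact (Filter.biInter_mem (Set.finite_Iic _)).2 fun j _ => esc_mem F T _ _ _
    · rw [hc3]
      exact (Filter.biInter_mem (Set.finite_Iic _)).2 fun j _ =>
        (Filter.biInter_mem (Set.finite_Iic _)).2 fun m _ => esc_mem F T _ _ _
  obtain ⟨x, hx, hob⟩ := hb S hSF
  obtain ⟨hx1, y, hy, hwit⟩ := hx
  by_cases hcase : ∀ k, v.length ≤ k → Big F T (res x k) t
  · -- Case II : all levels along x are big, hence outside the derivative region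
    have hnGF : ∀ k, v.length ≤ k → ¬ GFp F T (res x k, t) := by
      intro k hk
      induction k, hk using Nat.le_induction with
      | base => rwa [hx1]
      | succ k hk ih =>
        have hW := (notGFp_spec F T ih).2
        have h1 : x k ∈ c1 (res x k) := (hob k hk).1
        rw [hc1] at h1
        simp only [if_pos hW, mem_compl_iff, mem_setOf_eq] at h1
        intro hGFnext
        rw [res_succ] at hGFnext
        exact h1 ⟨by rw [← res_succ]; exact hcase (k + 1) (by omega), hGFnext⟩
    set m1 := y t.length with hm1
    set k0 := max v.length m1 with hk0def
    have hng0 : ¬ GFp F T (res x k0, t) := hnGF k0 (le_max_left _ _)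
    have hnb : ¬ Big F T (res x k0) (t ++ [m1]) := (notGFp_spec F T hng0).1 m1
    have hxmem : x ∈ BigSet T (res x k0) (t ++ [m1]) := by
      refine ⟨by rw [res_length], y, ?_, hwit⟩
      rw [show (t ++ [m1]).length = t.length + 1 by simp, res_succ, hy]
    obtain ⟨k, hk, hesc⟩ := esc_spec F T hnb x hxmem
    rw [res_length] at hk
    have h3 : x k ∈ c3 (res x k) := (hob k (le_trans (le_max_left _ _) hk)).2.2
    rw [hc3] at h3
    simp only [Set.mem_iInter] at h3
    have h5 : x k ∈ esc F T ((res x k).take k0) (t ++ [m1]) (res x k) :=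
      h3 k0 (Set.mem_Iic.2 (by rw [res_length]; exact hk))
        m1 (Set.mem_Iic.2 (by rw [res_length]; exact le_trans (le_max_right _ _) hk))
    rw [res_take x hk] at h5
    exact hesc h5
  · -- Case I : some level along x fails to be big; use its escape witness
    push_neg at hcase
    obtain ⟨k0, hk0, hnb⟩ := hcase
    have hxmem : x ∈ BigSet T (res x k0) t := ⟨by rw [res_length], y, hy, hwit⟩
    obtain ⟨k, hk, hesc⟩ := esc_spec F T hnb x hxmem
    rw [res_length] at hk
    have h2 : x k ∈ c2 (res x k) := (hob k (le_trans hk0 hk)).2.1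
    rw [hc2] at h2
    simp only [Set.mem_iInter] at h2
    have h5 : x k ∈ esc F T ((res x k).take k0) t (res x k) :=
      h2 k0 (Set.mem_Iic.2 (by rw [res_length]; exact hk))
    rw [res_take x hk] at h5
    exact hesc h5

end Derivative
section Construction

open Filter Set

attribute [local instance] Classical.propDecidable

variable (F : Filter ℕ) (T : Set (List ℕ × List ℕ))

/-- Extend the tether if possible. -/
noncomputable def newT (v t : List ℕ) : List ℕ :=
  if h : ∃ m, Big F T v (t ++ [m]) then t ++ [h.choose] else t

lemma big_newT {v t : List ℕ} (h : Big F T v t) : Big F T v (newT F T v t) := by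
  rw [newT]; split
  · next he => exact he.choose_spec
  · exact h

lemma newT_prefix (v t : List ℕ) : t <+: newT F T v t := by
  rw [newT]; split
  · exact ⟨_, rfl⟩
  · exact List.prefix_rfl

lemma newT_eq_iff {v t : List ℕ} : newT F T v t = t ↔ ¬ ∃ m, Big F T v (t ++ [m]) := by
  constructor
  · intro he h
    rw [newT, dif_pos h] at he
    simpa using congrArg List.length he
  · intro h; rw [newT, dif_neg h]

/-- The set of allowed next moves at a node `v` with tether `t`. -/
noncomputable def succSet (v t : List ℕ) : Set ℕ :=
  if newT F T v t = t then
    {n | Big F T (v ++ [n]) t ∧ rk F T (v ++ [n], t) < rk F T (v, t)}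
  else {n | Big F T (v ++ [n]) (newT F T v t)}

lemma succSet_big {v t : List ℕ} {n : ℕ} (h : n ∈ succSet F T v t) :
    Big F T (v ++ [n]) (newT F T v t) := by
  rw [succSet] at h
  split at h
  · next he => rw [he]; exact h.1
  · exact h

lemma succSet_pos {v t : List ℕ} (h : Big F T v t) : (succSet F T v t)ᶜ ∉ F := by
  rw [succSet]; split
  · next he => exact rankStep F T (claimG F T h) ((newT_eq_iff F T).1 he)
  · exact claimA F T (big_newT F T h)

/-- The tether attached to each node. -/
noncomputable def teth (v : List ℕ) : List ℕ :=
  if hv : v = [] then [] else newT F T v.dropLast (teth v.dropLast)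
termination_by v.length
decreasing_by
  rw [List.length_dropLast]
  have : v.length ≠ 0 := fun h => hv (List.length_eq_zero_iff.1 h)
  omega

lemma teth_nil : teth F T [] = [] := by rw [teth]; simp

lemma teth_concat (v : List ℕ) (n : ℕ) :
    teth F T (v ++ [n]) = newT F T v (teth F T v) := by
  rw [teth]
  simp [List.dropLast_concat]

/-- The Laver tree. -/
noncomputable def Ltree : Set (List ℕ) :=
  {v | ∀ j (h : j < v.length), v[j] ∈ succSet F T (v.take j) (teth F T (v.take j))}

lemma Ltree_nil : [] ∈ Ltree F T := by
  intro j h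
  simp at h

lemma Ltree_subtree : IsSubtree (Ltree F T) := by
  intro s hs w hw j hj
  have hwt : w = s.take w.length := List.prefix_iff_eq_take.1 hw
  have hjs : j < s.length := lt_of_lt_of_le hj hw.length_le
  have h1 : w.take j = s.take j := by
    rw [hwt, List.take_take, min_eq_left (le_of_lt hj)]
  have h2 : w[j] = s[j] := hw.getElem hj
  rw [h1, h2]
  exact hs j hjs

lemma Ltree_concat {v : List ℕ} {n : ℕ} (hv : v ∈ Ltree F T) :
    v ++ [n] ∈ Ltree F T ↔ n ∈ succSet F T v (teth F T v) := by
  constructor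
  · intro h
    have h1 := h v.length (by simp)
    rwa [List.take_left, List.getElem_concat_length rfl] at h1
  · intro hn j hj
    have hj' : j < v.length + 1 := by simpa using hj
    rcases Nat.lt_or_ge j v.length with h | h
    · rw [List.take_append_of_le_length (le_of_lt h), List.getElem_append_left h]
      exact hv j h
    · have hje : j = v.length := by omega
      subst hje
      rw [List.take_left, List.getElem_concat_length rfl]
      exact hn

lemma Ltree_big (hroot : Big F T [] []) {v : List ℕ} (hv : v ∈ Ltree F T) :
    Big F T v (teth F T v) := by
  rcases List.eq_nil_or_concat v with rfl | ⟨w, n, rfl⟩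
  · rw [teth_nil]; exact hroot
  · rw [List.concat_eq_append] at *
    have h1 := hv w.length (by simp)
    rw [List.take_left, List.getElem_concat_length rfl] at h1
    rw [teth_concat]
    exact succSet_big F T h1

/-- Every branch of the Laver tree is in the projection of `[T]`. -/
lemma Ltree_branch (hroot : Big F T [] []) {x : ℕ → ℕ}
    (hx : ∀ k, res x k ∈ Ltree F T) : ∃ y, Wit T x y := by
  set tk : ℕ → List ℕ := fun k => teth F T (res x k) with htk
  have hstep : ∀ k, x k ∈ succSet F T (res x k) (tk k) := by
    intro k
    have h1 := hx (k + 1) k (by rw [res_length]; omega)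
    rw [res_take x (Nat.le_succ k)] at h1
    have e2 : (res x (k+1))[k]'(by rw [res_length]; omega) = x k :=
      res_getElem x (Nat.lt_succ_self k)
    rwa [e2] at h1
  have htk_succ : ∀ k, tk (k + 1) = newT F T (res x k) (tk k) := by
    intro k
    rw [htk]
    dsimp only
    rw [res_succ, teth_concat]
  have hbigk : ∀ k, Big F T (res x k) (tk k) := fun k => Ltree_big F T hroot (hx k)
  have hchain : ∀ j k, j ≤ k → tk j <+: tk k := by
    intro j k hjk
    induction k, hjk using Nat.le_induction with
    | base => exact List.prefix_rfl
    | succ k hk ih =>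
      refine ih.trans ?_
      rw [htk_succ k]
      exact newT_prefix F T _ _
  by_cases hstab : ∃ K, ∀ k, K ≤ k → tk k = tk K
  · -- the tether stabilizes : infinite rank descent, contradiction
    exfalso
    obtain ⟨K, hK⟩ := hstab
    have hdec : ∀ k, K ≤ k →
        rk F T (res x (k + 1), tk K) < rk F T (res x k, tk K) := by
      intro k hk
      have h1 := hstep k
      rw [hK k hk] at h1
      have he : newT F T (res x k) (tk K) = tk K := by
        rw [← hK k hk, ← htk_succ k, hK (k + 1) (by omega), hK k hk]
      rw [succSet, if_pos he] at h1
      have h2 := h1.2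
      rwa [← res_succ] at h2
    set f : ℕ → Ordinal := fun i => rk F T (res x (K + i), tk K) with hf
    have hfd : ∀ i, f (i + 1) < f i := by
      intro i
      show rk F T (res x (K + (i + 1)), tk K) < rk F T (res x (K + i), tk K)
      have h := hdec (K + i) (by omega)
      rwa [show K + (i + 1) = (K + i) + 1 by omega]
    have hne : (Set.range f).Nonempty := ⟨f 0, Set.mem_range_self 0⟩
    obtain ⟨i, hi⟩ := Ordinal.lt_wf.min_mem (Set.range f) hne
    exact Ordinal.lt_wf.not_lt_min (Set.range f) (Set.mem_range_self (i + 1))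
      (by rw [← hi]; exact hfd i)
  · -- the tether grows unboundedly : glue it into a witness y
    push_neg at hstab
    have hlen : ∀ K, ∃ k, (tk K).length < (tk k).length := by
      intro K
      obtain ⟨k, hk, hne⟩ := hstab K
      have hp := hchain K k hk
      refine ⟨k, lt_of_le_of_ne hp.length_le ?_⟩
      intro hc
      exact hne (hp.eq_of_length hc).symm
    have hub : ∀ j, ∃ k, j < (tk k).length := by
      intro j
      induction j with
      | zero =>
        obtain ⟨k, hk⟩ := hlen 0
        exact ⟨k, by omega⟩
      | succ j ih =>
        obtain ⟨k, hk⟩ := ih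
        obtain ⟨k', hk'⟩ := hlen k
        exact ⟨k', by omega⟩
    choose φ hφ using hub
    set y : ℕ → ℕ := fun j => (tk (φ j)).getD j 0 with hydef
    have hagree : ∀ j k, j < (tk k).length → (tk k).getD j 0 = y j := by
      intro j k hj
      rw [hydef]
      dsimp only
      rcases le_total k (φ j) with h | h
      · have hp := hchain k (φ j) h
        rw [List.getD_eq_getElem _ _ hj, List.getD_eq_getElem _ _ (hφ j)]
        exact hp.getElem hj
      · have hp := hchain (φ j) k h
        rw [List.getD_eq_getElem _ _ hj, List.getD_eq_getElem _ _ (hφ j)]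
        exact (hp.getElem (hφ j)).symm
    have hres_y : ∀ J k, J ≤ (tk k).length → res y J = (tk k).take J := by
      intro J k hJ
      apply List.ext_getElem
      · rw [res_length, List.length_take]
        omega
      · intro i h1 h2
        have hiJ : i < J := by rwa [res_length] at h1
        rw [List.getElem_take, res_getElem y hiJ]
        have hit : i < (tk k).length := by
          have := @List.length_take _ J (tk k)
          omega
        rw [← hagree i k hit, List.getD_eq_getElem _ _ hit]
    refine ⟨y, fun J => ?_⟩
    set k := max J (φ J) with hkdef
    have hJk : J ≤ (tk k).length := by
      have h1 := (hchain (φ J) k (le_max_right _ _)).length_le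
      have h2 := hφ J
      omega
    obtain ⟨x', hx', y', hy', hwit'⟩ := bigSet_nonempty F T (hbigk k)
    rw [res_length] at hx'
    have h1 : res x' J = res x J := by
      have hJk' : J ≤ k := le_max_left _ _
      rw [← res_take x' hJk', hx', res_take x hJk']
    have h2 : res y' J = res y J := by
      have e1 := res_take y' hJk
      rw [hy'] at e1
      rw [← e1, hres_y J k hJk]
    rw [← h1, ← h2]
    exact hwit' J

end Construction
section Representation

open Filter Set

/-- Every analytic set is the projection of a tree of pairs. -/
lemma analytic_tree {A : Set (ℕ → ℕ)} (hA : IsAnalytic A) :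
    ∃ T : Set (List ℕ × List ℕ), ∀ x, x ∈ A ↔ ∃ y, Wit T x y := by
  obtain ⟨C, f, hC, hf, rfl⟩ := hA
  refine ⟨{p | ∃ z ∈ C, res z p.1.length = p.2 ∧ res (f z) p.1.length = p.1}, fun x => ?_⟩
  constructor
  · rintro ⟨z, hz, rfl⟩
    refine ⟨z, fun k => ?_⟩
    exact ⟨z, hz, by rw [res_length], by rw [res_length]⟩
  · rintro ⟨y, hw⟩
    have hw' : ∀ k, ∃ z, z ∈ C ∧ res z k = res y k ∧ res (f z) k = res x k := by
      intro k
      have h := hw k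
      simp only [Wit, mem_setOf_eq, res_length] at h ⊢
      obtain ⟨z, hz, h1, h2⟩ := h
      exact ⟨z, hz, h1, h2⟩
    choose z hzC hz1 hz2 using hw'
    have key : ∀ (g : ℕ → ℕ → ℕ) (w : ℕ → ℕ), (∀ k, res (g k) k = res w k) →
        Filter.Tendsto g Filter.atTop (nhds w) := by
      intro g w hg
      rw [tendsto_pi_nhds]
      intro i
      refine Filter.Tendsto.congr' ?_ tendsto_const_nhds
      rw [Filter.eventuallyEq_iff_exists_mem]
      refine ⟨Set.Ioi i, Filter.Ioi_mem_atTop i, fun k hk => ?_⟩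
      have hik : i < k := hk
      have e := List.getElem_of_eq (hg k) (by rw [res_length]; exact hik)
      rw [res_getElem (g k) hik] at e
      rw [res_getElem w hik] at e
      exact e.symm
    have hzy : Filter.Tendsto z Filter.atTop (nhds y) := key z y hz1
    have hyC : y ∈ C := hC.mem_of_tendsto hzy (Filter.Eventually.of_forall hzC)
    have hfx : Filter.Tendsto (fun k => f (z k)) Filter.atTop (nhds x) :=
      key (fun k => f (z k)) x hz2
    have hfy : Filter.Tendsto (fun k => f (z k)) Filter.atTop (nhds (f y)) := by
      have hcw := hf y hyC
      exact hcw.tendsto.comp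
        (tendsto_nhdsWithin_of_tendsto_nhds_of_eventually_within _ hzy
          (Filter.Eventually.of_forall hzC))
    exact ⟨y, hyC, tendsto_nhds_unique hfy hfx⟩

end Representation

end HLD

theorem hechler_laver_dichotomy_filter (F : Filter ℕ) [F.NeBot] (hF : F ≤ Filter.cofinite)
    (A : Set (ℕ → ℕ)) (hA : IsAnalytic A) :
    (∃ H : Set (List ℕ), MemHechlerF F H ∧ branches H ∩ A = ∅) ∨
    (∃ L : Set (List ℕ), MemLaverF F L ∧ branches L ⊆ A) := by
  classical
  obtain ⟨T, hT⟩ := HLD.analytic_tree hA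
  by_cases hroot : HLD.Big F T [] []
  · -- Laver side
    right
    refine ⟨HLD.Ltree F T, ⟨HLD.Ltree_subtree F T, HLD.Ltree_nil F T, ?_⟩, ?_⟩
    · intro s hs
      have he : {n | s ++ [n] ∈ HLD.Ltree F T} = HLD.succSet F T s (HLD.teth F T s) := by
        ext n
        exact HLD.Ltree_concat F T hs
      rw [he]
      exact HLD.succSet_pos F T (HLD.Ltree_big F T hroot hs)
    · intro x hx
      obtain ⟨y, hy⟩ := HLD.Ltree_branch F T hroot hx
      exact (hT x).2 ⟨y, hy⟩
  · -- Hechler side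
    left
    obtain ⟨S, hSF, hesc⟩ := (HLD.notBig_iff F T).1 hroot
    refine ⟨{s : List ℕ | ∀ j (h : j < s.length), s[j] ∈ S (s.take j)}, ⟨?_, ?_, ?_⟩, ?_⟩
    · -- subtree
      intro s hs w hw j hj
      have hwt : w = s.take w.length := List.prefix_iff_eq_take.1 hw
      have hjs : j < s.length := lt_of_lt_of_le hj hw.length_le
      have h1 : w.take j = s.take j := by
        rw [hwt, List.take_take, min_eq_left (le_of_lt hj)]
      have h2 : w[j] = s[j] := hw.getElem hj
      rw [h1, h2]
      exact hs j hjs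
    · -- root
      intro j h
      simp at h
    · -- F-splitting
      intro s hs
      have he : {n | s ++ [n] ∈
          {s : List ℕ | ∀ j (h : j < s.length), s[j] ∈ S (s.take j)}} = S s := by
        ext n
        simp only [Set.mem_setOf_eq]
        constructor
        · intro h
          have h1 := h s.length (by simp)
          rwa [List.take_left, List.getElem_concat_length rfl] at h1
        · intro hn j hj
          have hj' : j < s.length + 1 := by simpa using hj
          rcases Nat.lt_or_ge j s.length with h | h
          · rw [List.take_append_of_le_length (le_of_lt h), List.getElem_append_left h]
            exact hs j h
          · have hje : j = s.length := by omega
            subst hje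
            rw [List.take_left, List.getElem_concat_length rfl]
            exact hn
      rw [he]
      exact hSF s
    · -- branches disjoint from A
      rw [Set.eq_empty_iff_forall_notMem]
      rintro x ⟨hxb, hxA⟩
      obtain ⟨y, hy⟩ := (hT x).1 hxA
      have hxB : x ∈ HLD.BigSet T [] [] := ⟨rfl, y, rfl, hy⟩
      obtain ⟨k, -, hk⟩ := hesc x hxB
      apply hk
      have h1 := hxb (k + 1) k (by rw [HLD.res_length]; omega)
      rw [HLD.res_take x (Nat.le_succ k)] at h1
      have e2 : (res x (k + 1))[k]'(by rw [HLD.res_length]; omega) = x k :=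
        HLD.res_getElem x (Nat.lt_succ_self k)
      rwa [e2] at h1
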